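/- Under the consensus recursion z^{t+1} = W(z^t + y^{t+1} - y^t) with z^0 = y^0 = 0, if ‖y^k - y^{k-1}‖₂ ≤ √N·ε·b for all k = 1, ..., t, then for every coordinate j, |z_j^t - (1/N)∑_{i=1}^N y_i^t| ≤ √N·ε·λ₂·b/(1 - λ₂). In particular, if z_j^t > b for some j, then (1/N)∑_{i=1}^N y_i^t > (1 - √N·ε·λ₂/(1 - λ₂))·b. -/

import Mathlib

open Matrix Real
open scoped RealInnerProductSpace

noncomputable def toE {N : ℕ} (v : Fin N → ℝ) : EuclideanSpace ℝ (Fin N) :=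
  (WithLp.equiv 2 (Fin N → ℝ)).symm v

@[simp] lemma toE_apply {N : ℕ} (v : Fin N → ℝ) (i : Fin N) : toE v i = v i := rfl

lemma inner_toE {N : ℕ} (a b : Fin N → ℝ) : ⟪toE a, toE b⟫ = a ⬝ᵥ b := by
  simp [toE, PiLp.inner_apply, dotProduct, mul_comm]

lemma norm_toE {N : ℕ} (v : Fin N → ℝ) : ‖toE v‖ = Real.sqrt (∑ i, (v i) ^ 2) := by
  rw [EuclideanSpace.norm_eq]
  congr 1; refine Finset.sum_congr rfl fun i _ => ?_
  simp [Real.norm_eq_abs, sq_abs]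

lemma contract_aux {N : ℕ} (hN : 0 < N) (W : Matrix (Fin N) (Fin N) ℝ) (hherm : W.IsHermitian)
    (hstoch : W.mulVec (fun _ => 1) = fun _ => 1)
    {l₂ : ℝ} (hl₂0 : 0 ≤ l₂) (hl₂1 : l₂ < 1)
    (hspec : ∃ i₀ : Fin N, hherm.eigenvalues i₀ = 1 ∧
      ∀ i : Fin N, i ≠ i₀ → |hherm.eigenvalues i| ≤ l₂)
    (w : Fin N → ℝ) (hw : ∑ i, w i = 0) :
    ‖toE (W.mulVec w)‖ ≤ l₂ * ‖toE w‖ := by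
  obtain ⟨i₀, h1, h2⟩ := hspec
  set u := hherm.eigenvectorBasis with hu
  set μ := hherm.eigenvalues with hμ
  have hWT : Wᵀ = W := by
    rw [← W.conjTranspose_eq_transpose_of_trivial]; exact hherm.eq
  have hsym : ∀ x y : Fin N → ℝ, (W.mulVec x) ⬝ᵥ y = x ⬝ᵥ (W.mulVec y) := by
    intro x y
    rw [dotProduct_comm, dotProduct_mulVec, ← mulVec_transpose, hWT, dotProduct_comm]
  have hUE : ∀ i : Fin N, toE ⇑(u i) = u i := fun _ => rfl
  have hvec : ∀ i, W *ᵥ ⇑(u i) = μ i • ⇑(u i) := hherm.mulVec_eigenvectorBasis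
  have key : ∀ (i : Fin N) (x : Fin N → ℝ),
      ⇑(u i) ⬝ᵥ (W.mulVec x) = μ i * (⇑(u i) ⬝ᵥ x) := by
    intro i x
    rw [← hsym, hvec i, smul_dotProduct, smul_eq_mul]
  have hones : ∀ i : Fin N, i ≠ i₀ → ⇑(u i) ⬝ᵥ (fun _ => 1) = 0 := by
    intro i hi
    have hk := key i (fun _ => 1)
    rw [hstoch] at hk
    have hne : μ i ≠ 1 := by
      have := (abs_le.mp (h2 i hi)).2
      intro h; rw [h] at this; linarith
    have h0 : (1 - μ i) * (⇑(u i) ⬝ᵥ (fun _ => 1)) = 0 := by ring_nf; linarith [hk]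
    rcases mul_eq_zero.mp h0 with h | h
    · exact absurd (by linarith : μ i = 1) hne
    · exact h
  -- inner products with toE
  have hiE : ∀ (i : Fin N) (x : Fin N → ℝ), ⟪u i, toE x⟫ = ⇑(u i) ⬝ᵥ x := by
    intro i x; rw [← hUE i, inner_toE]; rfl
  -- ones is c • u i₀
  set c : ℝ := ⇑(u i₀) ⬝ᵥ (fun _ => 1) with hc
  have hrepr : (c • u i₀ : EuclideanSpace ℝ (Fin N)) = toE (fun _ => 1) := by
    have h := u.sum_repr' (toE (fun _ => 1))
    rw [← h]
    rw [Finset.sum_eq_single i₀]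
    · rw [hiE i₀]
    · intro i _ hi
      rw [hiE i, hones i hi, zero_smul]
    · intro h'; exact absurd (Finset.mem_univ i₀) h'
  -- u i₀ ⊥ w
  have hiw : ⟪u i₀, toE w⟫ = 0 := by
    have h0 : ⟪toE (fun _ => 1), toE w⟫ = 0 := by
      rw [inner_toE]; simpa [dotProduct] using hw
    rw [← hrepr, real_inner_smul_left] at h0
    have hc0 : c ≠ 0 := by
      intro hcc
      have := congrFun (congrArg (fun (v : EuclideanSpace ℝ (Fin N)) => (v : Fin N → ℝ)) hrepr) ⟨0, hN⟩
      rw [hcc, zero_smul] at this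
      simp at this
    rcases mul_eq_zero.mp h0 with h | h
    · exact absurd h hc0
    · exact h
  -- Parseval
  have parseval : ∀ x : EuclideanSpace ℝ (Fin N), ‖x‖ ^ 2 = ∑ i, ⟪u i, x⟫ ^ 2 := by
    intro x
    rw [← real_inner_self_eq_norm_sq, ← u.sum_inner_mul_inner x x]
    refine Finset.sum_congr rfl fun i _ => ?_
    rw [real_inner_comm, sq]
  have hWw : ∀ i, ⟪u i, toE (W.mulVec w)⟫ = μ i * ⟪u i, toE w⟫ := by
    intro i; rw [hiE, hiE, key]
  have hsq : ‖toE (W.mulVec w)‖ ^ 2 ≤ (l₂ * ‖toE w‖) ^ 2 := by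
    rw [parseval, mul_pow, parseval, Finset.mul_sum]
    refine Finset.sum_le_sum fun i _ => ?_
    rw [hWw i]
    by_cases hi : i = i₀
    · subst hi; rw [hiw]; simp
    · have := h2 i hi
      rw [mul_pow]
      have h1 : μ i ^ 2 ≤ l₂ ^ 2 := by
        have := sq_le_sq' (neg_le_of_abs_le this) (le_of_abs_le this)
        simpa using this
      nlinarith [sq_nonneg (⟪u i, toE w⟫ : ℝ)]
  calc ‖toE (W.mulVec w)‖ = Real.sqrt (‖toE (W.mulVec w)‖ ^ 2) := by
        rw [Real.sqrt_sq (norm_nonneg _)]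
    _ ≤ Real.sqrt ((l₂ * ‖toE w‖) ^ 2) := Real.sqrt_le_sqrt hsq
    _ = l₂ * ‖toE w‖ := Real.sqrt_sq (by positivity)

/-- Under the consensus recursion with increments bounded by `√N ε b`, every
consensus coordinate stays within `√N ε λ₂ b / (1 - λ₂)` of the average of the
local statistics; in particular, if `z_j^t > b` then the average exceeds
`(1 - √N ε λ₂ / (1 - λ₂)) b`. -/
theorem consensus_threshold_transfer (N : ℕ) (hN : 0 < N)
    (W : Matrix (Fin N) (Fin N) ℝ) (hherm : W.IsHermitian)
    (hstoch : W.mulVec (fun _ => 1) = fun _ => 1)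
    (l₂ : ℝ) (hl₂0 : 0 < l₂) (hl₂1 : l₂ < 1)
    (hspec : ∃ i₀ : Fin N, hherm.eigenvalues i₀ = 1 ∧
      ∀ i : Fin N, i ≠ i₀ → |hherm.eigenvalues i| ≤ l₂)
    (y z : ℕ → Fin N → ℝ) (hy0 : y 0 = 0) (hz0 : z 0 = 0)
    (hrec : ∀ t, z (t + 1) = W.mulVec (z t + y (t + 1) - y t))
    (ε b : ℝ) (hε : 0 < ε) (hb : 0 < b) (t : ℕ)
    (hinc : ∀ k ∈ Finset.Icc 1 t,
      Real.sqrt (∑ i, (y k i - y (k - 1) i) ^ 2) ≤ Real.sqrt N * ε * b) :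
    (∀ j : Fin N,
      |z t j - (N : ℝ)⁻¹ * ∑ i, y t i| ≤ Real.sqrt N * ε * l₂ * b / (1 - l₂)) ∧
    (∀ j : Fin N, b < z t j →
      (1 - Real.sqrt N * ε * l₂ / (1 - l₂)) * b < (N : ℝ)⁻¹ * ∑ i, y t i) := by
  have hNR : (0 : ℝ) < N := Nat.cast_pos.mpr hN
  have hWT : Wᵀ = W := by
    rw [← W.conjTranspose_eq_transpose_of_trivial]; exact hherm.eq
  set a : ℕ → ℝ := fun s => (N : ℝ)⁻¹ * ∑ i, y s i with ha
  -- column sums are 1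
  have hrow : ∀ j, ∑ i, W j i = 1 := by
    intro j
    have := congrFun hstoch j
    simpa [mulVec, dotProduct] using this
  have hcol : ∀ v : Fin N → ℝ, ∑ i, W.mulVec v i = ∑ i, v i := by
    intro v
    simp only [mulVec, dotProduct]
    rw [Finset.sum_comm]
    refine Finset.sum_congr rfl fun j _ => ?_
    rw [← Finset.sum_mul]
    have : ∑ i, W i j = 1 := by
      have : ∑ i, W i j = ∑ i, W j i := by
        refine Finset.sum_congr rfl fun i _ => ?_
        have := congrFun (congrFun hWT j) i
        simpa [Matrix.transpose_apply] using this
      rw [this, hrow]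
    rw [this, one_mul]
  have hconst : ∀ c : ℝ, W.mulVec (fun _ => c) = fun _ => c := by
    intro c
    have : (fun _ : Fin N => c) = c • (fun _ : Fin N => (1:ℝ)) := by
      funext i; simp
    rw [this, mulVec_smul, hstoch]
  -- main induction
  have main : ∀ s : ℕ, (∀ k ∈ Finset.Icc 1 s,
        Real.sqrt (∑ i, (y k i - y (k - 1) i) ^ 2) ≤ Real.sqrt N * ε * b) →
      (∑ i, z s i = ∑ i, y s i) ∧
      ‖toE (fun i => z s i - a s)‖ ≤
        Real.sqrt N * ε * b * (l₂ * ∑ k ∈ Finset.range s, l₂ ^ k) := by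
    intro s
    induction s with
    | zero =>
      intro _
      constructor
      · rw [hz0, hy0]
      · have : (fun i => z 0 i - a 0) = fun _ => (0:ℝ) := by
          funext i; simp [ha, hz0, hy0]
        rw [this, norm_toE]
        simp
    | succ s IH =>
      intro hincs
      have hIH := IH (fun k hk => hincs k (Finset.mem_Icc.mpr
        ⟨(Finset.mem_Icc.mp hk).1, le_trans (Finset.mem_Icc.mp hk).2 (Nat.le_succ s)⟩))
      set v : Fin N → ℝ := z s + y (s + 1) - y s with hv
      have hsumv : ∑ i, v i = ∑ i, y (s+1) i := by
        simp only [hv, Pi.add_apply, Pi.sub_apply]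
        rw [Finset.sum_sub_distrib, Finset.sum_add_distrib, hIH.1]
        ring
      have hsum1 : ∑ i, z (s+1) i = ∑ i, y (s+1) i := by
        rw [hrec s, hcol, hsumv]
      refine ⟨hsum1, ?_⟩
      set g : Fin N → ℝ := fun i => v i - a (s+1) with hg
      have hgsum : ∑ i, g i = 0 := by
        simp only [hg]
        rw [Finset.sum_sub_distrib, hsumv]
        simp [ha]
        field_simp
        ring
      have hzg : (fun i => z (s+1) i - a (s+1)) = W.mulVec g := by
        have hvg : v = g + (fun _ => a (s+1)) := by funext i; simp [hg]
        funext i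
        rw [hrec s, show z s + y (s+1) - y s = v from rfl, hvg, mulVec_add, hconst]
        simp
      have hcontract := contract_aux hN W hherm hstoch (le_of_lt hl₂0) hl₂1 hspec g hgsum
      -- split g
      set d : Fin N → ℝ := fun i => y (s+1) i - y s i with hd
      have hδ : a (s+1) - a s = (N:ℝ)⁻¹ * ∑ i, d i := by
        simp only [ha, hd]
        rw [Finset.sum_sub_distrib]
        ring
      have hgsplit : toE g = toE (fun i => z s i - a s) + toE (fun i => d i - (a (s+1) - a s)) := by
        apply (WithLp.equiv 2 (Fin N → ℝ)).injective
        funext i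
        simp only [hg, hv, hd, Pi.add_apply, Pi.sub_apply]
        show v i - a (s+1) = (z s i - a s) + (d i - (a (s+1) - a s))
        simp only [hv, hd, Pi.add_apply, Pi.sub_apply]
        ring
      have hproj : ‖toE (fun i => d i - (a (s+1) - a s))‖ ≤ ‖toE d‖ := by
        rw [norm_toE, norm_toE]
        apply Real.sqrt_le_sqrt
        have hsd : ∑ i, d i = N * (a (s+1) - a s) := by
          rw [hδ]
          field_simp
        have expand : ∑ i, (d i - (a (s+1) - a s))^2
            = (∑ i, (d i)^2) - N * (a (s+1) - a s)^2 := by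
          have hpt : ∀ i, (d i - (a (s+1) - a s))^2
              = (d i)^2 - 2 * (a (s+1) - a s) * d i + (a (s+1) - a s)^2 := by intro i; ring
          rw [Finset.sum_congr rfl (fun i _ => hpt i), Finset.sum_add_distrib,
            Finset.sum_sub_distrib, ← Finset.mul_sum, hsd]
          simp [Finset.card_univ]
          ring
        rw [expand]
        nlinarith [sq_nonneg (a (s+1) - a s), hNR]
      have hdbound : ‖toE d‖ ≤ Real.sqrt N * ε * b := by
        rw [norm_toE]
        have := hincs (s+1) (Finset.mem_Icc.mpr ⟨Nat.succ_le_succ (Nat.zero_le s), le_refl _⟩)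
        simpa [hd] using this
      have hgnorm : ‖toE g‖ ≤ Real.sqrt N * ε * b * (l₂ * ∑ k ∈ Finset.range s, l₂ ^ k)
          + Real.sqrt N * ε * b := by
        rw [hgsplit]
        calc ‖toE (fun i => z s i - a s) + toE (fun i => d i - (a (s+1) - a s))‖
            ≤ ‖toE (fun i => z s i - a s)‖ + ‖toE (fun i => d i - (a (s+1) - a s))‖ :=
              norm_add_le _ _
          _ ≤ _ := add_le_add hIH.2 (le_trans hproj hdbound)
      rw [hzg]
      calc ‖toE (W.mulVec g)‖ ≤ l₂ * ‖toE g‖ := hcontract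
        _ ≤ l₂ * (Real.sqrt N * ε * b * (l₂ * ∑ k ∈ Finset.range s, l₂ ^ k)
              + Real.sqrt N * ε * b) := by
            apply mul_le_mul_of_nonneg_left hgnorm (le_of_lt hl₂0)
        _ = Real.sqrt N * ε * b * (l₂ * ∑ k ∈ Finset.range (s+1), l₂ ^ k) := by
            rw [geom_sum_succ]
            ring
  -- conclude
  have hmain := main t hinc
  have hgeom : l₂ * ∑ k ∈ Finset.range t, l₂ ^ k ≤ l₂ / (1 - l₂) := by
    have h1 : (0:ℝ) < 1 - l₂ := by linarith
    rw [le_div_iff₀ h1]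
    have hG : (∑ k ∈ Finset.range t, l₂ ^ k) * (1 - l₂) = 1 - l₂ ^ t := by
      linear_combination -(geom_sum_mul l₂ t)
    nlinarith [hG, hl₂0.le, pow_nonneg hl₂0.le t]
  have part1 : ∀ j : Fin N,
      |z t j - (N : ℝ)⁻¹ * ∑ i, y t i| ≤ Real.sqrt N * ε * l₂ * b / (1 - l₂) := by
    intro j
    have hcoord : |z t j - a t| ≤ ‖toE (fun i => z t i - a t)‖ := by
      rw [norm_toE, ← Real.sqrt_sq_eq_abs]
      apply Real.sqrt_le_sqrt
      exact Finset.single_le_sum (f := fun i => (z t i - a t)^2)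
        (fun i _ => sq_nonneg _) (Finset.mem_univ j)
    have hB : Real.sqrt N * ε * b * (l₂ * ∑ k ∈ Finset.range t, l₂ ^ k)
        ≤ Real.sqrt N * ε * l₂ * b / (1 - l₂) := by
      have h0 : (0:ℝ) ≤ Real.sqrt N * ε * b := by positivity
      calc Real.sqrt N * ε * b * (l₂ * ∑ k ∈ Finset.range t, l₂ ^ k)
          ≤ Real.sqrt N * ε * b * (l₂ / (1 - l₂)) := mul_le_mul_of_nonneg_left hgeom h0
        _ = Real.sqrt N * ε * l₂ * b / (1 - l₂) := by ring
    exact le_trans (le_trans hcoord hmain.2) hB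
  refine ⟨part1, fun j hj => ?_⟩
  have h1 := part1 j
  have h2 := (abs_le.mp h1).2
  have heq : (1 - Real.sqrt N * ε * l₂ / (1 - l₂)) * b
      = b - Real.sqrt N * ε * l₂ * b / (1 - l₂) := by ring
  rw [heq]
  linarith
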